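/- For a single sample step in Lemma 1: if V is a random variable on a finite set 𝒱 with H(V) ≥ λ, and A ⊆ 𝒱 is a fixed set with |A| = i, then Pr[V ∉ A] ≥ (λ − 1 − log₂ i)/log₂ |𝒱|. -/

import Mathlib

open Finset

lemma sum_negMulLog_le_aux {V : Type*} [DecidableEq V] (S : Finset V) (p : V → ℝ)
    (hp : ∀ v ∈ S, 0 ≤ p v) :
    ∑ v ∈ S, Real.negMulLog (p v)
      ≤ Real.negMulLog (∑ v ∈ S, p v) + (∑ v ∈ S, p v) * Real.log S.card := by
  rcases S.eq_empty_or_nonempty with rfl | hS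
  · simp
  have hn : (0:ℝ) < S.card := by exact_mod_cast Finset.card_pos.mpr hS
  set s : ℝ := ∑ v ∈ S, p v with hs_def
  have hs0 : 0 ≤ s := Finset.sum_nonneg hp
  have key := Real.concaveOn_negMulLog.le_map_sum (t := S)
      (w := fun _ => ((S.card : ℝ))⁻¹) (p := p)
      (fun i _ => by positivity)
      (by simp [Finset.sum_const, mul_inv_cancel₀ hn.ne'])
      (fun i hi => Set.mem_Ici.mpr (hp i hi))
  simp only [smul_eq_mul, ← Finset.mul_sum] at key
  rcases eq_or_lt_of_le hs0 with hs | hs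
  · have hall : ∀ v ∈ S, p v = 0 := by
      intro v hv
      exact le_antisymm (le_of_eq ((Finset.sum_eq_zero_iff_of_nonneg hp).mp hs.symm v hv))
        (hp v hv)
    rw [Finset.sum_congr rfl (fun v hv => by rw [hall v hv])]
    simp [← hs]
  · have h2 : Real.negMulLog ((S.card : ℝ)⁻¹ * s)
        = (S.card : ℝ)⁻¹ * (Real.negMulLog s + s * Real.log S.card) := by
      rw [Real.negMulLog, Real.log_mul (by positivity) hs.ne', Real.log_inv, Real.negMulLog]
      ring
    rw [← hs_def] at key
    rw [h2] at key
    calc ∑ v ∈ S, Real.negMulLog (p v)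
        = (S.card : ℝ) * ((S.card : ℝ)⁻¹ * ∑ v ∈ S, Real.negMulLog (p v)) := by
          field_simp
      _ ≤ (S.card : ℝ) * ((S.card : ℝ)⁻¹ * (Real.negMulLog s + s * Real.log S.card)) :=
          mul_le_mul_of_nonneg_left key hn.le
      _ = Real.negMulLog s + s * Real.log S.card := by field_simp

/-- single sampling step of Lemma 1: if `H(V) ≥ lam` and `A ⊆ 𝒱` with
`|A| = i ≥ 1`, then `Pr[V ∉ A] ≥ (lam - 1 - log₂ i)/log₂ |𝒱|`. -/
theorem single_sample_step {V : Type*} [Fintype V] [DecidableEq V]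
    (p : V → ℝ) (hp0 : ∀ v, 0 ≤ p v) (hp1 : ∑ v, p v = 1)
    (lam : ℝ) (hH : lam ≤ ∑ v, -(p v * Real.logb 2 (p v)))
    (A : Finset V) (i : ℕ) (hA : A.card = i) (hi : 1 ≤ i) :
    (lam - 1 - Real.logb 2 i) / Real.logb 2 (Fintype.card V)
      ≤ ∑ v ∈ Aᶜ, p v := by
  have hq0 : 0 ≤ ∑ v ∈ Aᶜ, p v := Finset.sum_nonneg fun v _ => hp0 v
  set q : ℝ := ∑ v ∈ Aᶜ, p v with hq_def
  set s : ℝ := ∑ v ∈ A, p v with hs_def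
  have hsq : s + q = 1 := by
    rw [hs_def, hq_def, Finset.sum_add_sum_compl, hp1]
  have hs0 : 0 ≤ s := Finset.sum_nonneg fun v _ => hp0 v
  have hs1 : s ≤ 1 := by linarith
  have hlog2 : (0:ℝ) < Real.log 2 := Real.log_pos one_lt_two
  -- card positivity
  have hcard1 : 1 ≤ Fintype.card V := by
    by_contra h
    have : Fintype.card V = 0 := by omega
    have : IsEmpty V := Fintype.card_eq_zero_iff.mp this
    rw [Finset.univ_eq_empty, Finset.sum_empty] at hp1
    norm_num at hp1
  -- entropy in natural log
  have hHn : lam * Real.log 2 ≤ ∑ v, Real.negMulLog (p v) := by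
    have heq : ∑ v, -(p v * Real.logb 2 (p v))
        = (∑ v, Real.negMulLog (p v)) / Real.log 2 := by
      rw [Finset.sum_div]
      refine Finset.sum_congr rfl fun v _ => ?_
      rw [Real.logb, Real.negMulLog]
      field_simp
    rw [heq, le_div_iff₀ hlog2] at hH
    exact hH
  have hbA : ∑ v ∈ A, Real.negMulLog (p v)
      ≤ Real.negMulLog s + s * Real.log i := by
    have := sum_negMulLog_le_aux A p (fun v _ => hp0 v)
    rwa [hA] at this
  have hlogle : Real.log (Aᶜ.card) ≤ Real.log (Fintype.card V) := by
    rcases Nat.eq_zero_or_pos Aᶜ.card with h | h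
    · rw [h]
      simp only [Nat.cast_zero, Real.log_zero]
      exact Real.log_nonneg (by exact_mod_cast hcard1)
    · exact Real.log_le_log (by exact_mod_cast h)
        (by exact_mod_cast Finset.card_le_univ Aᶜ)
  have hbAc : ∑ v ∈ Aᶜ, Real.negMulLog (p v)
      ≤ Real.negMulLog q + q * Real.log (Fintype.card V) := by
    refine (sum_negMulLog_le_aux Aᶜ p (fun v _ => hp0 v)).trans ?_
    gcongr
  have hbin : Real.negMulLog s + Real.negMulLog q ≤ Real.log 2 := by
    have : q = 1 - s := by linarith
    rw [this, ← Real.binEntropy_eq_negMulLog_add_negMulLog_one_sub]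
    exact Real.binEntropy_le_log_two
  have hlogi : 0 ≤ Real.log i := Real.log_nonneg (by exact_mod_cast hi)
  have hsli : s * Real.log i ≤ Real.log i := by nlinarith
  have hsplit : ∑ v, Real.negMulLog (p v)
      = ∑ v ∈ A, Real.negMulLog (p v) + ∑ v ∈ Aᶜ, Real.negMulLog (p v) :=
    (Finset.sum_add_sum_compl A _).symm
  have hmain : lam * Real.log 2
      ≤ Real.log 2 + Real.log i + q * Real.log (Fintype.card V) := by
    rw [hsplit] at hHn
    linarith
  -- conclude
  rcases eq_or_lt_of_le hcard1 with hc | hc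
  · rw [← hc]
    norm_num
    exact hq0
  · have hlogc : 0 < Real.log (Fintype.card V) := by
      apply Real.log_pos
      exact_mod_cast hc
    have hL : 0 < Real.logb 2 (Fintype.card V) := by
      rw [Real.logb]
      positivity
    rw [div_le_iff₀ hL, Real.logb, Real.logb]
    calc lam - 1 - Real.log i / Real.log 2
        = (lam * Real.log 2 - Real.log 2 - Real.log i) / Real.log 2 := by
          field_simp
      _ ≤ (q * Real.log (Fintype.card V)) / Real.log 2 := by
          gcongr
          linarith
      _ = q * (Real.log (Fintype.card V) / Real.log 2) := by ring
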